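/- Let c : E(K⃗_ℕ) → {1,...,r+1} be an edge-colouring of the complete symmetric digraph on ℕ⁺ such that for each i ∈ {1,...,r} there is no directed path of length ℓᵢ in colour i. Then there exists a set A ⊆ ℕ⁺ of upper density at least ∏_{i=1}^r (1/ℓᵢ) such that all edges between distinct elements of A have colour r+1; in particular, there is an infinite directed path in colour r+1 of upper density at least ∏_{i=1}^r (1/ℓᵢ). -/

import Mathlib

open scoped Classical

/-- Upper density of a set of positive integers. -/
noncomputable def upperDensity (A : Set ℕ) : ℝ :=
  Filter.limsup
    (fun n : ℕ => (((Finset.Icc 1 n).filter (fun m => m ∈ A)).card : ℝ) / n)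
    Filter.atTop

namespace Stmt6Aux

open Relation

noncomputable def dec : ℕ ≃ ℕ × ℕ := (Denumerable.eqv (ℕ × ℕ)).symm

def S (E : ℕ → ℕ → Prop) : ℕ → ℕ → ℕ → Prop
  | 0, _, _ => False
  | (k+1), u, v => S E k u v ∨ (dec k = (u, v) ∧ E u v ∧ ¬ ReflTransGen (S E k) v u)

def D (E : ℕ → ℕ → Prop) (u v : ℕ) : Prop := ∃ k, S E k u v

lemma S_mono {E : ℕ → ℕ → Prop} {k k' : ℕ} (h : k ≤ k') {u v : ℕ}
    (hs : S E k u v) : S E k' u v := by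
  induction h with
  | refl => exact hs
  | step _ ih => exact Or.inl ih

lemma S_sub {E : ℕ → ℕ → Prop} : ∀ {k u v}, S E k u v → E u v := by
  intro k
  induction k with
  | zero => intro u v h; exact h.elim
  | succ k ih =>
    intro u v h
    rcases h with h | ⟨_, hE, _⟩
    · exact ih h
    · exact hE

lemma transGen_union {R : ℕ → ℕ → Prop} {u0 v0 : ℕ}
    (h : ¬ ReflTransGen R v0 u0) {x y : ℕ}
    (hxy : TransGen (fun u v => R u v ∨ (u = u0 ∧ v = v0)) x y) :
    TransGen R x y ∨ (ReflTransGen R x u0 ∧ ReflTransGen R v0 y) := by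
  induction hxy with
  | single hstep =>
    rcases hstep with h1 | ⟨rfl, rfl⟩
    · exact Or.inl (TransGen.single h1)
    · exact Or.inr ⟨ReflTransGen.refl, ReflTransGen.refl⟩
  | tail _ hstep ih =>
    rcases hstep with h1 | ⟨rfl, rfl⟩
    · rcases ih with h2 | ⟨h2, h3⟩
      · exact Or.inl (h2.tail h1)
      · exact Or.inr ⟨h2, h3.tail h1⟩
    · rcases ih with h2 | ⟨h2, h3⟩
      · exact Or.inr ⟨h2.to_reflTransGen, ReflTransGen.refl⟩
      · exact absurd h3 h

lemma transGen_bot {x y : ℕ} (h : TransGen (fun _ _ : ℕ => False) x y) : False := by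
  induction h with
  | single h => exact h
  | tail _ h _ => exact h

lemma S_acyclic (E : ℕ → ℕ → Prop) : ∀ k a, ¬ TransGen (S E k) a a := by
  intro k
  induction k with
  | zero =>
    intro a h
    exact transGen_bot (TransGen.mono (fun _ _ hh => hh) _ _ h)
  | succ k ih =>
    intro a ha
    by_cases hcyc : ReflTransGen (S E k) (dec k).2 (dec k).1
    · have hsub : ∀ u v, S E (k+1) u v → S E k u v := by
        intro u v h
        rcases h with h | ⟨heq, _, hn⟩
        · exact h
        · exfalso; apply hn
          have h1 : (dec k).1 = u := by rw [heq]
          have h2 : (dec k).2 = v := by rw [heq]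
          rwa [h1, h2] at hcyc
      exact ih a (TransGen.mono hsub _ _ ha)
    · have hsub : ∀ u v, S E (k+1) u v →
          (fun u v => S E k u v ∨ (u = (dec k).1 ∧ v = (dec k).2)) u v := by
        intro u v h
        rcases h with h | ⟨heq, _, _⟩
        · exact Or.inl h
        · right
          constructor
          · rw [heq]
          · rw [heq]
      rcases transGen_union hcyc (TransGen.mono hsub _ _ ha) with h | ⟨h1, h2⟩
      · exact ih a h
      · exact hcyc (h2.trans h1)

lemma D_toS {E : ℕ → ℕ → Prop} {x y : ℕ} (h : TransGen (D E) x y) :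
    ∃ k, TransGen (S E k) x y := by
  induction h with
  | single h =>
    obtain ⟨k, hk⟩ := h
    exact ⟨k, TransGen.single hk⟩
  | tail _ h ih =>
    obtain ⟨k1, h1⟩ := ih
    obtain ⟨k2, h2⟩ := h
    exact ⟨max k1 k2,
      TransGen.tail (TransGen.mono (fun a b hab => S_mono (le_max_left _ _) hab) _ _ h1)
        (S_mono (le_max_right _ _) h2)⟩

lemma D_acyclic (E : ℕ → ℕ → Prop) (a : ℕ) : ¬ TransGen (D E) a a := fun h => by
  obtain ⟨k, hk⟩ := D_toS h
  exact S_acyclic E k a hk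

def W (E : ℕ → ℕ → Prop) (m n : ℕ) : Prop :=
  ∃ f : ℕ → ℕ, f m = n ∧ ∀ j < m, D E (f j) (f (j+1))

lemma walk_trans {E : ℕ → ℕ → Prop} {f : ℕ → ℕ} {m : ℕ}
    (hf : ∀ j < m, D E (f j) (f (j+1))) :
    ∀ t j, j + t + 1 ≤ m → TransGen (D E) (f j) (f (j + t + 1)) := by
  intro t
  induction t with
  | zero => intro j hj; exact TransGen.single ⟨(hf j (by omega)).choose, (hf j (by omega)).choose_spec⟩
  | succ t ih =>
    intro j hj
    have h1 := ih j (by omega)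
    have h2 := hf (j + t + 1) (by omega)
    exact h1.tail h2

lemma W_lt {E : ℕ → ℕ → Prop} {ℓ : ℕ}
    (Hyp : ¬ ∃ f : ℕ → ℕ, (∀ j ≤ ℓ, ∀ j' ≤ ℓ, j ≠ j' → f j ≠ f j') ∧
      (∀ j < ℓ, E (f j) (f (j+1)))) {m n : ℕ} (hw : W E m n) : m < ℓ := by
  by_contra hge
  push_neg at hge
  obtain ⟨f, _, hf⟩ := hw
  apply Hyp
  refine ⟨f, ?_, ?_⟩
  · intro j hj j' hj' hne heq
    rcases Nat.lt_or_ge j j' with h | h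
    · have hT := walk_trans hf (j' - j - 1) j (by omega)
      rw [show j + (j' - j - 1) + 1 = j' by omega] at hT
      rw [heq] at hT
      exact D_acyclic E _ hT
    · have hlt : j' < j := by omega
      have hT := walk_trans hf (j - j' - 1) j' (by omega)
      rw [show j' + (j - j' - 1) + 1 = j by omega, ← heq] at hT
      exact D_acyclic E _ hT
  · intro j hj
    obtain ⟨k, hk⟩ := hf j (by omega)
    exact S_sub hk

noncomputable def phi (E : ℕ → ℕ → Prop) (n : ℕ) : ℕ := sSup {m | W E m n}

lemma W_zero (E : ℕ → ℕ → Prop) (n : ℕ) : W E 0 n :=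
  ⟨fun _ => n, rfl, fun j hj => absurd hj (Nat.not_lt_zero j)⟩

section

variable {E : ℕ → ℕ → Prop} {ℓ : ℕ}
variable (Hyp : ¬ ∃ f : ℕ → ℕ, (∀ j ≤ ℓ, ∀ j' ≤ ℓ, j ≠ j' → f j ≠ f j') ∧
      (∀ j < ℓ, E (f j) (f (j+1))))

include Hyp

lemma bddW (n : ℕ) : BddAbove {m | W E m n} :=
  ⟨ℓ, fun m hm => (W_lt Hyp hm).le⟩

lemma phi_mem (n : ℕ) : W E (phi E n) n :=
  Nat.sSup_mem (⟨0, W_zero E n⟩ : Set.Nonempty {m | W E m n}) (bddW Hyp n)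

lemma phi_lt (n : ℕ) : phi E n < ℓ := W_lt Hyp (phi_mem Hyp n)

lemma le_phi {m n : ℕ} (hw : W E m n) : m ≤ phi E n := le_csSup (bddW Hyp n) hw

lemma phi_lt_of_D {u v : ℕ} (h : D E u v) : phi E u < phi E v := by
  obtain ⟨f, hfu, hf⟩ := phi_mem Hyp u
  have hw : W E (phi E u + 1) v := by
    refine ⟨fun j => if j ≤ phi E u then f j else v, ?_, ?_⟩
    · show (if phi E u + 1 ≤ phi E u then f (phi E u + 1) else v) = v
      rw [if_neg (by omega)]
    intro j hj
    show D E (if j ≤ phi E u then f j else v) (if j + 1 ≤ phi E u then f (j + 1) else v)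
    have hj' : j ≤ phi E u := by omega
    by_cases hcase : j < phi E u
    · rw [if_pos hj', if_pos (by omega : j + 1 ≤ phi E u)]
      exact hf j hcase
    · have hje : j = phi E u := by omega
      rw [if_pos hj', if_neg (by omega), hje, hfu]
      exact h
  have := le_phi Hyp hw
  omega

lemma phi_lt_of_trans {u v : ℕ} (h : TransGen (D E) u v) : phi E u < phi E v := by
  induction h with
  | single h => exact phi_lt_of_D Hyp h
  | tail _ h ih => exact lt_trans ih (phi_lt_of_D Hyp h)

lemma phi_ne (hne : ∀ u v, E u v → u ≠ v) {u v : ℕ} (h : E u v) :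
    phi E u ≠ phi E v := by
  by_cases hd : D E u v
  · exact Nat.ne_of_lt (phi_lt_of_D Hyp hd)
  · set k := dec.symm (u, v) with hkdef
    have hk : dec k = (u, v) := Equiv.apply_symm_apply _ _
    have hS : ¬ S E (k+1) u v := fun hs => hd ⟨k+1, hs⟩
    have hrtg : ReflTransGen (S E k) v u := by
      by_contra hr
      exact hS (Or.inr ⟨hk, h, hr⟩)
    have hrtg' : ReflTransGen (D E) v u := ReflTransGen.mono (fun a b hab => ⟨k, hab⟩) _ _ hrtg
    rcases hrtg'.cases_head with heq | ⟨w, hvw, hwu⟩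
    · exact absurd heq.symm (hne u v h)
    · have htg : TransGen (D E) v u := TransGen.head' hvw hwu
      exact (Nat.ne_of_lt (phi_lt_of_trans Hyp htg)).symm

end

theorem gallai (E : ℕ → ℕ → Prop) (ℓ : ℕ)
    (hne : ∀ u v, E u v → u ≠ v)
    (Hyp : ¬ ∃ f : ℕ → ℕ, (∀ j ≤ ℓ, ∀ j' ≤ ℓ, j ≠ j' → f j ≠ f j') ∧
      (∀ j < ℓ, E (f j) (f (j+1)))) :
    ∃ φ : ℕ → ℕ, (∀ n, φ n < ℓ) ∧ ∀ u v, E u v → φ u ≠ φ v :=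
  ⟨phi E, fun n => phi_lt Hyp n, fun _ _ h => phi_ne Hyp hne h⟩

end Stmt6Aux

/-- Let `c` be an `(r+1)`-edge-colouring of the complete symmetric digraph on
the positive integers such that for each `i ∈ [r]` there is no directed path of
length `ℓ i` in colour `i`. Then there is a set `A` of upper density at least
`∏ i, 1 / ℓ i` all of whose internal edges have colour `r + 1`; in particular
there is an infinite directed path in colour `r + 1` of upper density at least
`∏ i, 1 / ℓ i`. -/
theorem stmt6 (r : ℕ) (ℓ : Fin r → ℕ) (hℓ : ∀ i, 0 < ℓ i)
    (c : ℕ → ℕ → Fin (r + 1))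
    (hc : ∀ i : Fin r, ¬∃ v : Fin (ℓ i + 1) → ℕ, Function.Injective v ∧
      ∀ j : Fin (ℓ i), c (v j.castSucc) (v j.succ) = i.castSucc) :
    (∃ A : Set ℕ, (∏ i, (1 : ℝ) / ℓ i) ≤ upperDensity A ∧
      ∀ m ∈ A, ∀ n ∈ A, m ≠ n → c m n = Fin.last r) ∧
    ∃ v : ℕ → ℕ, Function.Injective v ∧
      (∀ i : ℕ, c (v i) (v (i + 1)) = Fin.last r) ∧
      (∏ i, (1 : ℝ) / ℓ i) ≤ upperDensity (Set.range v) := by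
  -- Step 1: for each colour i, a proper `ℓ i`-colouring φ i of the colour-i digraph
  have key : ∀ i : Fin r, ∃ φ : ℕ → ℕ, (∀ n, φ n < ℓ i) ∧
      ∀ u v : ℕ, (u ≠ v ∧ c u v = i.castSucc) → φ u ≠ φ v := by
    intro i
    apply Stmt6Aux.gallai _ (ℓ i) (fun u v h => h.1)
    rintro ⟨f, hinj, hedge⟩
    apply hc i
    refine ⟨fun j => f j.val, ?_, ?_⟩
    · intro j j' heq
      by_contra hne
      exact hinj j.val (Nat.lt_succ_iff.mp j.isLt) j'.val (Nat.lt_succ_iff.mp j'.isLt)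
        (Fin.val_injective.ne hne) heq
    · intro j
      have := (hedge j.val j.isLt).2
      simpa [Fin.coe_castSucc, Fin.val_succ] using this
  choose φ hφlt hφne using key
  -- Step 2: pigeonhole on the product colouring
  set X := ∀ i : Fin r, Fin (ℓ i) with hXdef
  have hXne : Nonempty X := ⟨fun i => ⟨0, hℓ i⟩⟩
  set K : ℕ := ∏ i, ℓ i with hKdef
  have hKpos : 0 < K := Finset.prod_pos (fun i _ => hℓ i)
  have hcard : Fintype.card X = K := by
    simp [hXdef, hKdef, Fintype.card_pi]
  set Φ : ℕ → X := fun n i => ⟨φ i n, hφlt i n⟩ with hΦdef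
  have hprod : (∏ i, (1 : ℝ) / ℓ i) = 1 / (K : ℝ) := by
    rw [hKdef]
    push_cast
    rw [Finset.prod_div_distrib]
    simp
  set cnt : X → ℕ → ℕ :=
    fun t n => ((Finset.Icc 1 n).filter (fun m => m ∈ ({m | Φ m = t} : Set ℕ))).card
    with hcnt
  have hsum : ∀ n : ℕ, ∑ t : X, cnt t n = n := by
    intro n
    have h1 := Finset.card_eq_sum_card_fiberwise
      (f := Φ) (s := Finset.Icc 1 n) (t := Finset.univ) (fun x _ => Finset.mem_univ _)
    rw [Nat.card_Icc] at h1
    simpa [hcnt, Set.mem_setOf_eq] using h1.symm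
  have hpig : ∀ n : ℕ, 1 ≤ n → ∃ t : X, (n : ℝ) / K ≤ cnt t n := by
    intro n hn
    have hsum' : ∑ t : X, (cnt t n : ℝ) = n := by exact_mod_cast hsum n
    have hconst : ∑ _t : X, (n : ℝ) / K = n := by
      rw [Finset.sum_const, Finset.card_univ, hcard, nsmul_eq_mul]
      field_simp
    obtain ⟨t, _, ht⟩ := Finset.exists_le_of_sum_le (Finset.univ_nonempty)
      (by rw [hconst, hsum'] : ∑ _t : X, (n : ℝ) / K ≤ ∑ t : X, (cnt t n : ℝ))
    exact ⟨t, ht⟩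
  -- Step 3: some class is frequently large
  have hfreq : ∃ t : X, ∃ᶠ n : ℕ in Filter.atTop, 1 ≤ n ∧ (n : ℝ) / K ≤ cnt t n := by
    by_contra hcon
    push_neg at hcon
    have h1 : ∀ t : X, ∀ᶠ n : ℕ in Filter.atTop, ¬(1 ≤ n ∧ (n : ℝ) / K ≤ cnt t n) :=
      fun t => (hcon t).mono (fun n hn h => absurd h.2 (not_le.mpr (hn h.1)))
    have h2 : ∀ᶠ n : ℕ in Filter.atTop, ∀ t : X, ¬(1 ≤ n ∧ (n : ℝ) / K ≤ cnt t n) :=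
      Filter.eventually_all.mpr h1
    have h3 : ∀ᶠ n : ℕ in Filter.atTop, 1 ≤ n := Filter.eventually_ge_atTop 1
    obtain ⟨n, hn2, hn1⟩ := (h2.and h3).exists
    obtain ⟨t, ht⟩ := hpig n hn1
    exact hn2 t ⟨hn1, ht⟩
  obtain ⟨t, hft⟩ := hfreq
  set A : Set ℕ := {m | Φ m = t} with hAdef
  -- the density function
  set u : ℕ → ℝ := fun n => (((Finset.Icc 1 n).filter (fun m => m ∈ A)).card : ℝ) / n
    with hudef
  have hu_eq : ∀ n, u n = (cnt t n : ℝ) / n := fun n => rfl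
  have hubd : Filter.IsBoundedUnder (· ≤ ·) Filter.atTop u := by
    refine Filter.isBoundedUnder_of ⟨1, fun n => ?_⟩
    rcases Nat.eq_zero_or_pos n with rfl | hn
    · simp [hudef]
    · rw [hu_eq]
      have hle : cnt t n ≤ n := by
        have := Finset.card_filter_le (Finset.Icc 1 n)
          (fun m => m ∈ ({m | Φ m = t} : Set ℕ))
        rwa [Nat.card_Icc, Nat.add_sub_cancel] at this
      rw [div_le_one (by exact_mod_cast hn)]
      exact_mod_cast hle
  have hfreq' : ∃ᶠ n in Filter.atTop, 1 / (K : ℝ) ≤ u n := by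
    refine hft.mono ?_
    rintro n ⟨hn1, hn2⟩
    rw [hu_eq]
    rw [div_le_div_iff₀ (by positivity) (by exact_mod_cast hn1)]
    rw [div_le_iff₀ (by exact_mod_cast hKpos)] at hn2
    linarith [hn2]
  have hud : upperDensity A = Filter.limsup u Filter.atTop := by
    unfold upperDensity
    rw [hudef]
    congr!
  have hdens : 1 / (K : ℝ) ≤ upperDensity A := by
    rw [hud]
    exact Filter.le_limsup_of_frequently_le hfreq' hubd
  -- edges inside A have colour `last`
  have hAedge : ∀ m ∈ A, ∀ n ∈ A, m ≠ n → c m n = Fin.last r := by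
    intro m hm n hn hmn
    by_contra hlast
    have hvr : (c m n).val ≠ r := fun h => hlast (Fin.ext (by simp [h]))
    have hval : (c m n).val < r := by
      have := (c m n).isLt
      omega
    have hcol : c m n = (⟨(c m n).val, hval⟩ : Fin r).castSucc := by
      apply Fin.ext
      simp
    apply hφne ⟨(c m n).val, hval⟩ m n ⟨hmn, hcol⟩
    have hΦ : Φ m = Φ n := by
      rw [Set.mem_setOf_eq] at hm hn
      rw [hm, hn]
    have := congrFun hΦ ⟨(c m n).val, hval⟩
    exact congrArg Fin.val this
  -- A is infinite
  have hAinf : A.Infinite := by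
    by_contra hcon
    rw [Set.not_infinite] at hcon
    have hfin := hcon
    set M := hfin.toFinset.card with hM
    obtain ⟨n, hnge, hn1, hn2⟩ := Filter.frequently_atTop.mp hft (K * M + 1)
    have hsubs : (Finset.Icc 1 n).filter (fun m => m ∈ ({m | Φ m = t} : Set ℕ))
        ⊆ hfin.toFinset := by
      intro x hx
      rw [Finset.mem_filter] at hx
      exact hfin.mem_toFinset.mpr hx.2
    have hcnt_le : cnt t n ≤ M := Finset.card_le_card hsubs
    rw [div_le_iff₀ (by exact_mod_cast hKpos)] at hn2
    have : (n : ℝ) ≤ (M : ℝ) * K := by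
      calc (n : ℝ) ≤ (cnt t n : ℝ) * K := hn2
        _ ≤ (M : ℝ) * K := by
            have : (cnt t n : ℝ) ≤ M := by exact_mod_cast hcnt_le
            have hK0 : (0:ℝ) ≤ K := by positivity
            nlinarith
    have h9 : (n : ℕ) ≤ M * K := by exact_mod_cast this
    rw [Nat.mul_comm M K] at h9
    omega
  -- enumerate A
  set p : ℕ → Prop := fun n => n ∈ A with hp
  have hpinf : (setOf p).Infinite := by
    rwa [show setOf p = A from rfl]
  refine ⟨⟨A, by rwa [hprod], hAedge⟩, Nat.nth p, Nat.nth_injective hpinf, ?_, ?_⟩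
  · intro i
    have h1 : Nat.nth p i ∈ A := Nat.nth_mem_of_infinite hpinf i
    have h2 : Nat.nth p (i+1) ∈ A := Nat.nth_mem_of_infinite hpinf (i+1)
    have hne : Nat.nth p i ≠ Nat.nth p (i+1) :=
      fun h => by exact absurd (Nat.nth_injective hpinf h) (by omega)
    exact hAedge _ h1 _ h2 hne
  · rw [Nat.range_nth_of_infinite hpinf]
    rwa [hprod]
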